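/- For an integer n ≥ 2, define probability distributions p and q on {1,…,n} by p_1 = log(n)/(2n·log(log(n))), p_i = (1−p_1)/(n−1) for i > 1, and q_2 = p_1, q_i = p_2 for i ≠ 2. Then: (1) there exists c > 0 such that for all sufficiently large n, sup_i |p_i − q_i| ≥ c·log(n)/(n·log(log(n))); and (2) lim_{n→∞} (n/log(n)) · D(p‖q) = 1/2, where D(p‖q) = Σ_i p_i·log(p_i/q_i) is the Kullback–Leibler divergence. -/

import Mathlib

/-- The distribution `p` of Proposition 6: `p₁ = log n / (2n log log n)`, and
`p_i = (1 - p₁)/(n - 1)` for `2 ≤ i ≤ n` (and `0` outside `{1,…,n}`). -/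
noncomputable def pdist (n : ℕ) (i : ℕ) : ℝ :=
  if i = 1 then Real.log n / (2 * n * Real.log (Real.log n))
  else if 2 ≤ i ∧ i ≤ n then
    (1 - Real.log n / (2 * n * Real.log (Real.log n))) / ((n : ℝ) - 1)
  else 0

/-- The distribution `q` of Proposition 6: `q` is `p` with the masses of the symbols
`1` and `2` swapped, i.e. `q₂ = p₁` and `q_i = p₂` for `i ≠ 2` in `{1,…,n}`. -/
noncomputable def qdist (n : ℕ) (i : ℕ) : ℝ :=
  pdist n (Equiv.swap 1 2 i)

open Filter Real

/-- `p₁`. -/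
noncomputable def af (n : ℕ) : ℝ := Real.log n / (2 * n * Real.log (Real.log n))
/-- `p₂`. -/
noncomputable def bf (n : ℕ) : ℝ := (1 - af n) / ((n : ℝ) - 1)
/-- error term `c`. -/
noncomputable def cf (n : ℕ) : ℝ := (1 - af n) * ((n : ℝ) / ((n : ℝ) - 1)) * (1 / Real.log n)
/-- error term `r`. -/
noncomputable def rf (n : ℕ) : ℝ :=
  -Real.log 2 - Real.log (1 - af n) + (Real.log ((n : ℝ) - 1) - Real.log n)

lemma pd1 (n : ℕ) : pdist n 1 = af n := by simp [pdist, af]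

lemma pd2 {n : ℕ} (hn : 2 ≤ n) : pdist n 2 = bf n := by
  simp [pdist, bf, af, hn]

lemma qd1 (n : ℕ) : qdist n 1 = pdist n 2 := by
  simp [qdist]

lemma qd2 (n : ℕ) : qdist n 2 = pdist n 1 := by
  simp [qdist]

lemma qd_of {n i : ℕ} (h1 : i ≠ 1) (h2 : i ≠ 2) : qdist n i = pdist n i := by
  simp [qdist, Equiv.swap_apply_of_ne_of_ne h1 h2]

lemma sum_eval {n : ℕ} (hn : 2 ≤ n) :
    ∑ i ∈ Finset.Icc 1 n, pdist n i * Real.log (pdist n i / qdist n i)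
      = af n * Real.log (af n / bf n) + bf n * Real.log (bf n / af n) := by
  have hsub : ({1, 2} : Finset ℕ) ⊆ Finset.Icc 1 n := by
    intro i hi
    simp only [Finset.mem_insert, Finset.mem_singleton] at hi
    rcases hi with rfl | rfl <;> simp [Finset.mem_Icc] <;> omega
  rw [← Finset.sum_subset hsub ?_]
  · rw [Finset.sum_pair (by norm_num : (1 : ℕ) ≠ 2), qd1, qd2, pd1, pd2 hn]
  · intro i hi hni
    simp only [Finset.mem_insert, Finset.mem_singleton, not_or] at hni
    rw [qd_of hni.1 hni.2]
    rcases eq_or_ne (pdist n i) 0 with h | h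
    · simp [h]
    · simp [div_self h]

lemma tendstoL : Tendsto (fun n : ℕ => Real.log n) atTop atTop :=
  Real.tendsto_log_atTop.comp tendsto_natCast_atTop_atTop

lemma tendstoM : Tendsto (fun n : ℕ => Real.log (Real.log n)) atTop atTop :=
  Real.tendsto_log_atTop.comp tendstoL

/-- `log log n / log n → 0`. -/
lemma tendstoML : Tendsto (fun n : ℕ => Real.log (Real.log n) / Real.log n) atTop (nhds 0) :=
  ((Real.isLittleO_log_id_atTop.comp_tendsto Real.tendsto_log_atTop).tendsto_div_nhds_zero).comp
    tendsto_natCast_atTop_atTop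

lemma tendsto_one_div {f : ℕ → ℝ} (h : Tendsto f atTop atTop) :
    Tendsto (fun n => 1 / f n) atTop (nhds 0) := by
  rw [show (fun n => 1 / f n) = f⁻¹ from funext fun n => one_div (f n)]
  exact h.inv_tendsto_atTop

/-- `log n / n → 0`. -/
lemma tendstoLN : Tendsto (fun n : ℕ => Real.log n / (n : ℝ)) atTop (nhds 0) :=
  (Real.isLittleO_log_id_atTop.tendsto_div_nhds_zero).comp tendsto_natCast_atTop_atTop

lemma tendsto_af : Tendsto af atTop (nhds 0) := by
  have h : Tendsto (fun n : ℕ => (Real.log n / n) * (1 / (2 * Real.log (Real.log n))))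
      atTop (nhds (0 * 0)) := by
    refine tendstoLN.mul (tendsto_one_div ?_)
    exact tendstoM.const_mul_atTop (by norm_num)
  have h0 : (0 : ℝ) * 0 = 0 := by norm_num
  rw [h0] at h
  refine h.congr fun n => ?_
  unfold af
  ring

/-- `n/(n-1) → 1`. -/
lemma tendsto_nn1 : Tendsto (fun n : ℕ => (n : ℝ) / ((n : ℝ) - 1)) atTop (nhds 1) := by
  have h1 : Tendsto (fun n : ℕ => (n : ℝ) - 1) atTop atTop :=
    tendsto_atTop_add_const_right _ _ tendsto_natCast_atTop_atTop
  have h2 : Tendsto (fun n : ℕ => 1 + 1 / ((n : ℝ) - 1)) atTop (nhds (1 + 0)) :=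
    tendsto_const_nhds.add (tendsto_one_div h1)
  rw [add_zero] at h2
  refine h2.congr' ?_
  filter_upwards [eventually_gt_atTop 1] with n hn
  have hne : ((n : ℝ) - 1) ≠ 0 := by
    have : (1 : ℝ) < n := by exact_mod_cast hn
    linarith
  field_simp
  ring

theorem stmt_16 :
    (∃ c > (0 : ℝ), ∃ N : ℕ, ∀ n ≥ N,
        c * Real.log n / (n * Real.log (Real.log n)) ≤ ⨆ i : ℕ, |pdist n i - qdist n i|) ∧
      Filter.Tendsto
        (fun n : ℕ => ((n : ℝ) / Real.log n) *
          ∑ i ∈ Finset.Icc 1 n, pdist n i * Real.log (pdist n i / qdist n i))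
        Filter.atTop (nhds (1 / 2)) := by
  -- common eventual facts
  have hMev : ∀ᶠ n : ℕ in atTop, 0 < Real.log (Real.log n) := tendstoM.eventually_gt_atTop 0
  have haev : ∀ᶠ n : ℕ in atTop, af n < 1 / 2 :=
    tendsto_af.eventually (gt_mem_nhds (by norm_num))
  constructor
  · -- Part 1
    refine ⟨1/4, by norm_num, ?_⟩
    have hMLev : ∀ᶠ n : ℕ in atTop,
        Real.log (Real.log n) / Real.log n < 1 / 8 :=
      tendstoML.eventually (gt_mem_nhds (by norm_num))
    have hev : ∀ᶠ n : ℕ in atTop,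
        1/4 * Real.log n / (n * Real.log (Real.log n)) ≤ ⨆ i : ℕ, |pdist n i - qdist n i| := by
      filter_upwards [hMev, haev, hMLev, eventually_ge_atTop 3] with n hM ha2 hML hn3
      have hnR : (3 : ℝ) ≤ (n : ℝ) := by exact_mod_cast hn3
      have hLpos : 0 < Real.log n := Real.log_pos (by linarith)
      have hn1pos : (0 : ℝ) < (n : ℝ) - 1 := by linarith
      have hnpos : (0 : ℝ) < (n : ℝ) := by linarith
      have hapos : 0 < af n := by
        unfold af; positivity
      have hM8 : 8 * Real.log (Real.log n) < Real.log n := by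
        rw [div_lt_iff₀ hLpos] at hML; linarith
      -- b ≤ a/2
      have hb1 : bf n ≤ 1 / ((n : ℝ) - 1) := by
        unfold bf
        rw [div_le_div_iff₀ hn1pos hn1pos]
        nlinarith [mul_nonneg hapos.le hn1pos.le]
      have h2 : 1 / ((n : ℝ) - 1) ≤ af n / 2 := by
        rw [div_le_div_iff₀ hn1pos (by norm_num : (0:ℝ) < 2)]
        unfold af
        rw [div_mul_eq_mul_div, le_div_iff₀ (by positivity)]
        nlinarith [mul_pos hM hnpos, mul_lt_mul_of_pos_right hM8 hn1pos]
      have hba : bf n ≤ af n / 2 := hb1.trans h2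
      have hbnonneg : 0 ≤ bf n := by
        unfold bf
        apply div_nonneg (by linarith) (by linarith)
      -- bounded above
      set f : ℕ → ℝ := fun i => |pdist n i - qdist n i| with hf
      have hp : ∀ i, |pdist n i| ≤ |af n| + |bf n| := by
        intro i
        unfold pdist af bf
        split_ifs
        · exact le_add_of_nonneg_right (abs_nonneg _)
        · simp only [af]
          exact le_add_of_nonneg_left (abs_nonneg _)
        · simpa using add_nonneg (abs_nonneg _) (abs_nonneg _)
      have hq : ∀ i, |qdist n i| ≤ |af n| + |bf n| := by
        intro i
        rw [qdist]
        exact hp _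
      have hbdd : BddAbove (Set.range f) := by
        refine ⟨2 * (|af n| + |bf n|), ?_⟩
        rintro x ⟨i, rfl⟩
        calc |pdist n i - qdist n i| ≤ |pdist n i| + |qdist n i| := abs_sub _ _
          _ ≤ (|af n| + |bf n|) + (|af n| + |bf n|) := add_le_add (hp i) (hq i)
          _ = 2 * (|af n| + |bf n|) := by ring
      have hle : f 1 ≤ ⨆ i : ℕ, f i := le_ciSup hbdd 1
      have hf1 : f 1 = |af n - bf n| := by
        rw [hf]
        simp only
        rw [qd1, pd1, pd2 (by omega)]
      refine le_trans ?_ hle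
      rw [hf1]
      have habs : af n / 2 ≤ |af n - bf n| := by
        rw [abs_of_nonneg (by linarith)]
        linarith
      refine le_trans (le_of_eq ?_) habs
      unfold af
      ring
    rw [Filter.eventually_atTop] at hev
    obtain ⟨N, hN⟩ := hev
    exact ⟨N, hN⟩
  · -- Part 2
    -- model limits
    have hMc : Tendsto (fun n : ℕ => Real.log (Real.log n) * cf n) atTop (nhds 0) := by
      have h : Tendsto (fun n : ℕ => (1 - af n) * ((n : ℝ) / ((n : ℝ) - 1))
          * (Real.log (Real.log n) / Real.log n)) atTop (nhds ((1 - 0) * 1 * 0)) :=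
        ((tendsto_const_nhds.sub tendsto_af).mul tendsto_nn1).mul tendstoML
      have h0 : ((1 : ℝ) - 0) * 1 * 0 = 0 := by norm_num
      rw [h0] at h
      refine h.congr fun n => ?_
      unfold cf
      ring
    have hlog1a : Tendsto (fun n : ℕ => Real.log (1 - af n)) atTop (nhds 0) := by
      have h1 : Tendsto (fun n : ℕ => 1 - af n) atTop (nhds 1) := by
        simpa using tendsto_const_nhds.sub tendsto_af
      have h := ((Real.continuousAt_log one_ne_zero).tendsto).comp h1
      simpa [Function.comp_def] using h
    have hlognn : Tendsto (fun n : ℕ => Real.log ((n : ℝ) - 1) - Real.log n)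
        atTop (nhds 0) := by
      have h1 : Tendsto (fun n : ℕ => ((n : ℝ) - 1) / (n : ℝ)) atTop (nhds 1) := by
        have h2 : Tendsto (fun n : ℕ => 1 - 1 / (n : ℝ)) atTop (nhds (1 - 0)) :=
          tendsto_const_nhds.sub (tendsto_one_div tendsto_natCast_atTop_atTop)
        rw [sub_zero] at h2
        refine h2.congr' ?_
        filter_upwards [eventually_gt_atTop 0] with n hn
        have : (n : ℝ) ≠ 0 := Nat.cast_ne_zero.mpr hn.ne'
        field_simp
      have h := ((Real.continuousAt_log one_ne_zero).tendsto).comp h1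
      simp only [Function.comp_def, Real.log_one] at h
      refine h.congr' ?_
      filter_upwards [eventually_ge_atTop 2] with n hn
      have hnR : (2 : ℝ) ≤ (n : ℝ) := by exact_mod_cast hn
      exact Real.log_div (by linarith) (by linarith)
    have hr : Tendsto rf atTop (nhds (-Real.log 2)) := by
      have h : Tendsto (fun n : ℕ => -Real.log 2 - Real.log (1 - af n)
          + (Real.log ((n : ℝ) - 1) - Real.log n)) atTop (nhds (-Real.log 2 - 0 + 0)) :=
        (tendsto_const_nhds.sub hlog1a).add hlognn
      rw [sub_zero, add_zero] at h
      exact h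
    have hrM : Tendsto (fun n : ℕ => rf n / Real.log (Real.log n)) atTop (nhds 0) := by
      have h : Tendsto (fun n : ℕ => rf n * (1 / Real.log (Real.log n))) atTop
          (nhds (-Real.log 2 * 0)) := hr.mul (tendsto_one_div tendstoM)
      rw [mul_zero] at h
      refine h.congr fun n => by ring
    have hlogMM : Tendsto (fun n : ℕ =>
        Real.log (Real.log (Real.log n)) / Real.log (Real.log n)) atTop (nhds 0) :=
      (Real.isLittleO_log_id_atTop.tendsto_div_nhds_zero).comp tendstoM
    have hmodel : Tendsto (fun n : ℕ => (1/2 : ℝ)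
        * (1 - 2 * (Real.log (Real.log n) * cf n))
        * (1 - Real.log (Real.log (Real.log n)) / Real.log (Real.log n)
            + rf n / Real.log (Real.log n))) atTop (nhds (1/2)) := by
      have h : Tendsto (fun n : ℕ => (1/2 : ℝ)
          * (1 - 2 * (Real.log (Real.log n) * cf n))
          * (1 - Real.log (Real.log (Real.log n)) / Real.log (Real.log n)
              + rf n / Real.log (Real.log n))) atTop
          (nhds ((1/2 : ℝ) * (1 - 2 * 0) * (1 - 0 + 0))) :=
        (tendsto_const_nhds.mul (tendsto_const_nhds.sub (hMc.const_mul 2))).mul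
          ((tendsto_const_nhds.sub hlogMM).add hrM)
      have h0 : (1/2 : ℝ) * (1 - 2 * 0) * (1 - 0 + 0) = 1/2 := by norm_num
      rwa [h0] at h
    refine Filter.Tendsto.congr' ?_ hmodel
    filter_upwards [hMev, haev, eventually_ge_atTop 3] with n hM ha2 hn3
    have hnR : (3 : ℝ) ≤ (n : ℝ) := by exact_mod_cast hn3
    have hLpos : 0 < Real.log n := Real.log_pos (by linarith)
    have hn1pos : (0 : ℝ) < (n : ℝ) - 1 := by linarith
    have hnpos : (0 : ℝ) < (n : ℝ) := by linarith
    have hapos : 0 < af n := by unfold af; positivity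
    have hbpos : 0 < bf n := by
      unfold bf
      apply div_pos (by linarith) hn1pos
    have hnne : ((n : ℝ)) ≠ 0 := hnpos.ne'
    have loga : Real.log (af n) = Real.log (Real.log n) - Real.log 2 - Real.log n
        - Real.log (Real.log (Real.log n)) := by
      unfold af
      rw [Real.log_div hLpos.ne' (by positivity),
        Real.log_mul (by positivity) hM.ne',
        Real.log_mul (two_ne_zero) hnne]
      ring
    have logb : Real.log (bf n) = Real.log (1 - af n) - Real.log ((n : ℝ) - 1) := by
      unfold bf
      rw [Real.log_div (by linarith) hn1pos.ne']
    rw [sum_eval (by omega : 2 ≤ n), Real.log_div hapos.ne' hbpos.ne',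
      Real.log_div hbpos.ne' hapos.ne', loga, logb]
    unfold bf cf rf af
    field_simp
    ring
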